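/- Let k ≥ 1 and let w : A(K) → ℝ_{>0} be a positive arc-weighting of the complete digraph K on k+1 vertices (every ordered pair of distinct vertices is an arc). Then K contains k directed cycles C_1, ..., C_k whose total weights w(C_1), ..., w(C_k) are pairwise distinct. -/

import Mathlib

/-- A directed cycle of length `n` in the digraph with arc relation `A`. -/
def IsDicycle {V : Type*} (A : V → V → Prop) (n : ℕ) (c : ℕ → V) : Prop :=
  2 ≤ n ∧ (∀ i, A (c i) (c (i + 1))) ∧ (∀ i, c (i + n) = c i) ∧
    ∀ i j, i < n → j < n → c i = c j → i = j

/-- Let `k ≥ 1` and let `w` be a positive arc-weighting of the complete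
digraph on `k+1` vertices (arc relation `≠`).  Then there are `k` directed cycles
whose total weights are pairwise distinct. -/
theorem stmt5 {V : Type*} [Fintype V] (k : ℕ) (hk : 1 ≤ k)
    (hcard : Fintype.card V = k + 1)
    (w : V → V → ℝ) (hw : ∀ u v : V, u ≠ v → 0 < w u v) :
    ∃ (N : Fin k → ℕ) (c : Fin k → ℕ → V),
      (∀ j, IsDicycle (fun a b : V => a ≠ b) (N j) (c j)) ∧
      Function.Injective
        (fun j => ∑ i ∈ Finset.range (N j), w (c j i) (c j (i + 1))) := by
  classical
  have hne : Nonempty V := Fintype.card_pos_iff.mp (by omega)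
  obtain ⟨v⟩ := hne
  obtain ⟨L, hlen, hnodup, hvL, hsorted⟩ :
      ∃ L : List V, L.length = k ∧ L.Nodup ∧ v ∉ L ∧
        L.Pairwise (fun a b => w a v ≤ w b v) := by
    refine ⟨((Finset.univ.erase v).toList).mergeSort (fun a b => decide (w a v ≤ w b v)),
      ?_, ?_, ?_, ?_⟩
    · rw [(List.mergeSort_perm _ _).length_eq, Finset.length_toList,
        Finset.card_erase_of_mem (Finset.mem_univ v), Finset.card_univ, hcard]
      omega
    · exact (List.mergeSort_perm _ _).nodup_iff.mpr (Finset.nodup_toList _)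
    · intro h
      have h2 := (List.mergeSort_perm _ _).mem_iff.mp h
      rw [Finset.mem_toList, Finset.mem_erase] at h2
      exact h2.1 rfl
    · have := List.pairwise_mergeSort (le := fun a b => decide (w a v ≤ w b v))
        (fun a b c h1 h2 => by
          simp only [decide_eq_true_eq] at *; exact le_trans h1 h2)
        (fun a b => by
          simp only [Bool.or_eq_true, decide_eq_true_eq]; exact le_total _ _)
        ((Finset.univ.erase v).toList)
      exact this.imp (fun h => by simpa using h)
  -- the vertex sequence
  set f : ℕ → V := fun m => match m with
    | 0 => v
    | m + 1 => L.getD m v with hf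
  have hf0 : f 0 = v := rfl
  have hfs : ∀ m, ∀ hm : m < k, f (m + 1) = L.get ⟨m, by omega⟩ := by
    intro m hm
    simp only [hf]
    exact List.getD_eq_get L (d := v) ⟨m, by omega⟩
  -- injectivity of f on {0,...,k}
  have hinj : ∀ a b, a ≤ k → b ≤ k → f a = f b → a = b := by
    intro a b ha hb hab
    match a, b with
    | 0, 0 => rfl
    | 0, b + 1 =>
      rw [hf0, hfs b (by omega)] at hab
      exact absurd (hab ▸ L.get_mem _) hvL
    | a + 1, 0 =>
      rw [hf0, hfs a (by omega)] at hab
      exact absurd (hab ▸ L.get_mem _) hvL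
    | a + 1, b + 1 =>
      rw [hfs a (by omega), hfs b (by omega)] at hab
      have h2 := (List.Nodup.get_inj_iff hnodup).mp hab
      have : a = b := by simpa using congrArg Fin.val h2
      omega
  -- monotone weights to v
  have hmonw : ∀ a b, a < b → b < k → w (f (a + 1)) v ≤ w (f (b + 1)) v := by
    intro a b hab hb
    rw [hfs a (by omega), hfs b (by omega)]
    exact List.pairwise_iff_get.mp hsorted ⟨a, by omega⟩ ⟨b, by omega⟩ hab
  -- the cycles
  refine ⟨fun j => (j : ℕ) + 2, fun j i => f (i % ((j : ℕ) + 2)), ?_, ?_⟩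
  · intro j
    have hjk : (j : ℕ) < k := j.isLt
    refine ⟨Nat.le_add_left 2 _, ?_, ?_, ?_⟩
    · intro i
      show f (i % ((j : ℕ) + 2)) ≠ f ((i + 1) % ((j : ℕ) + 2))
      have ha : i % ((j : ℕ) + 2) < (j : ℕ) + 2 := Nat.mod_lt _ (by omega)
      have hstep : (i + 1) % ((j : ℕ) + 2) = (i % ((j : ℕ) + 2) + 1) % ((j : ℕ) + 2) := by
        rw [Nat.add_mod, Nat.mod_eq_of_lt (show 1 < (j : ℕ) + 2 by omega)]
      intro heq
      rcases Nat.lt_or_ge (i % ((j : ℕ) + 2) + 1) ((j : ℕ) + 2) with h | h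
      · rw [hstep, Nat.mod_eq_of_lt h] at heq
        have := hinj (i % ((j : ℕ) + 2)) (i % ((j : ℕ) + 2) + 1) (by omega) (by omega) heq
        omega
      · have h3 : i % ((j : ℕ) + 2) + 1 = (j : ℕ) + 2 := by omega
        rw [hstep, h3, Nat.mod_self] at heq
        have := hinj (i % ((j : ℕ) + 2)) 0 (by omega) (by omega) heq
        omega
    · intro i
      show f ((i + ((j : ℕ) + 2)) % ((j : ℕ) + 2)) = f (i % ((j : ℕ) + 2))
      rw [Nat.add_mod_right]
    · intro i i' hi hi' heq
      have hi2 : i < (j : ℕ) + 2 := hi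
      have hi2' : i' < (j : ℕ) + 2 := hi'
      have heq2 : f (i % ((j : ℕ) + 2)) = f (i' % ((j : ℕ) + 2)) := heq
      rw [Nat.mod_eq_of_lt hi2, Nat.mod_eq_of_lt hi2'] at heq2
      exact hinj i i' (by omega) (by omega) heq2
  · -- distinct weights
    have hSval : ∀ j : ℕ,
        (∑ i ∈ Finset.range (j + 2), w (f (i % (j + 2))) (f ((i + 1) % (j + 2))))
          = (∑ i ∈ Finset.range (j + 1), w (f i) (f (i + 1))) + w (f (j + 1)) v := by
      intro j
      rw [Finset.sum_range_succ (fun i => w (f (i % (j + 2))) (f ((i + 1) % (j + 2))))]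
      congr 1
      · apply Finset.sum_congr rfl
        intro i hi
        rw [Finset.mem_range] at hi
        rw [Nat.mod_eq_of_lt (by omega), Nat.mod_eq_of_lt (by omega)]
      · rw [Nat.mod_eq_of_lt (by omega), Nat.mod_self, hf0]
    set S : ℕ → ℝ :=
      fun j => (∑ i ∈ Finset.range (j + 1), w (f i) (f (i + 1))) + w (f (j + 1)) v with hS
    have hstep : ∀ j, j + 2 ≤ k → S j < S (j + 1) := by
      intro j hj
      have h1 : 0 < w (f (j + 1)) (f (j + 2)) :=
        hw _ _ (fun h => by have := hinj (j + 1) (j + 2) (by omega) (by omega) h; omega)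
      have h2 : w (f (j + 1)) v ≤ w (f (j + 2)) v := hmonw j (j + 1) (by omega) (by omega)
      have : S (j + 1) = S j - w (f (j + 1)) v
          + w (f (j + 1)) (f (j + 2)) + w (f (j + 2)) v := by
        simp only [hS]
        rw [Finset.sum_range_succ (fun i => w (f i) (f (i + 1))) (j + 1)]
        ring
      rw [this]
      linarith
    have hlt : ∀ a b, a < b → b < k → S a < S b := by
      intro a b hab hb
      induction b with
      | zero => omega
      | succ b ih =>
        rcases Nat.lt_or_ge a b with h | h
        · exact lt_trans (ih h (by omega)) (hstep b (by omega))
        · have : a = b := by omega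
          subst this
          exact hstep a (by omega)
    intro j1 j2 heq
    simp only at heq
    rw [hSval, hSval] at heq
    by_contra hne
    have hne' : j1 ≠ j2 := hne
    rcases lt_or_gt_of_ne hne' with h | h
    · exact absurd heq (ne_of_lt (hlt _ _ h j2.isLt))
    · exact absurd heq.symm (ne_of_lt (hlt _ _ h j1.isLt))
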